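/- Let p_θ(x^n) = ∏_{i=1}^n (2π)^{-1/2} exp(−(x_i−θ)²/2), let n* ≥ 1, and define the two-point prior-based e-variable S_θ(x^n) := ( (1/2) p_{θ−√(2/n*)}(x^n) + (1/2) p_{θ+√(2/n*)}(x^n) ) / p_θ(x^n), with e-posterior P̄(θ|x^n) := 1/S_θ(x^n). Fix x^n ∈ ℝ^n and let θ̂ = n^{-1}∑ x_i. Then there exists a continuous function f : [0,∞) → [0,∞) with lim_{x→∞} x·f(x) = 0 such that for all θ ∈ ℝ: P̄(θ|x^n) = f( (1/2)(θ̂−θ)² ), i.e. the e-posterior is a function of the KL divergence D(θ̂‖θ) of the required type (so that, combined with the minimax result, the MLE θ̂ is the e-posterior minimax estimator for weighted squared error loss). -/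

import Mathlib

open MeasureTheory Real Filter

lemma sqrt_tendsto_atTop' : Tendsto Real.sqrt atTop atTop := by
  apply tendsto_atTop_atTop.mpr
  intro b
  refine ⟨b^2, fun c hc => ?_⟩
  calc b ≤ |b| := le_abs_self b
    _ = Real.sqrt (b^2) := (Real.sqrt_sq_eq_abs b).symm
    _ ≤ Real.sqrt c := Real.sqrt_le_sqrt hc

/-- Part 2 of Proposition (KLahoy): the two-point prior-based e-posterior for the
normal location family is a function `f(D(θ̂‖θ))` of the KL divergence
`D(θ̂‖θ) = (1/2)(θ̂−θ)²`, where `f : [0,∞) → [0,∞)` is continuous with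
`x·f(x) → 0` as `x → ∞`. -/
theorem twopoint_eposterior_is_function_of_KL
    (n nstar : ℕ) (hn : 1 ≤ n) (hnstar : 1 ≤ nstar)
    -- the density of `n` i.i.d. `N(θ,1)` observations
    (p : ℝ → (Fin n → ℝ) → ℝ)
    (hp : ∀ θ x, p θ x = ∏ i, (2 * π) ^ (-(1 : ℝ) / 2) * exp (-(x i - θ) ^ 2 / 2))
    -- the two-point prior-based e-variable with anticipated sample size `n*`
    (S : ℝ → (Fin n → ℝ) → ℝ)
    (hS : ∀ θ x, S θ x =
      ((1 / 2) * p (θ - Real.sqrt (2 / (nstar : ℝ))) x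
        + (1 / 2) * p (θ + Real.sqrt (2 / (nstar : ℝ))) x) / p θ x)
    -- the fixed data and the MLE
    (x : Fin n → ℝ)
    (θhat : ℝ) (hθhat : θhat = (∑ i, x i) / n) :
    ∃ f : ℝ → ℝ,
      ContinuousOn f (Set.Ici 0) ∧
      (∀ t ∈ Set.Ici (0 : ℝ), 0 ≤ f t) ∧
      Tendsto (fun t => t * f t) atTop (nhds 0) ∧
      ∀ θ : ℝ, (S θ x)⁻¹ = f ((1 / 2) * (θhat - θ) ^ 2) := by
  have hnpos : (0:ℝ) < n := by exact_mod_cast Nat.lt_of_lt_of_le Nat.zero_lt_one hn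
  have hnstarpos : (0:ℝ) < nstar := by exact_mod_cast Nat.lt_of_lt_of_le Nat.zero_lt_one hnstar
  set δ : ℝ := Real.sqrt (2 / (nstar:ℝ)) with hδ
  have hδpos : 0 < δ := Real.sqrt_pos.mpr (by positivity)
  set a : ℝ := n * δ with ha
  have hapos : 0 < a := by positivity
  set K : ℝ := (n:ℝ) * δ^2 / 2 with hK
  refine ⟨fun t => Real.exp K / Real.cosh (a * Real.sqrt (2*t)), ?_, ?_, ?_, ?_⟩
  · apply Continuous.continuousOn
    apply Continuous.div continuous_const
    · exact Real.continuous_cosh.comp (continuous_const.mul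
        (Real.continuous_sqrt.comp (continuous_const.mul continuous_id)))
    · intro t; exact (Real.cosh_pos _).ne'
  · intro t _; exact div_nonneg (Real.exp_pos _).le (Real.cosh_pos _).le
  · -- tendsto
    have hcomp : Tendsto (fun t : ℝ => a * Real.sqrt (2*t)) atTop atTop :=
      (sqrt_tendsto_atTop'.comp (tendsto_id.const_mul_atTop two_pos)).const_mul_atTop hapos
    have h0 : Tendsto (fun s : ℝ => (1/(2*a^2)) * (s^2 * Real.exp (-s))) atTop (nhds 0) := by
      have := (tendsto_pow_mul_exp_neg_atTop_nhds_zero 2).const_mul (1/(2*a^2))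
      simpa using this
    have h1 : Tendsto (fun t : ℝ => t * Real.exp (-(a * Real.sqrt (2*t)))) atTop (nhds 0) := by
      apply (h0.comp hcomp).congr'
      filter_upwards [eventually_ge_atTop (0:ℝ)] with t ht
      have hs : (a * Real.sqrt (2*t))^2 = a^2 * (2*t) := by
        rw [mul_pow, Real.sq_sqrt (by linarith)]
      simp only [Function.comp]
      rw [hs]
      field_simp
    have h2 : Tendsto (fun t : ℝ => Real.exp K * 2 *
        (t * Real.exp (-(a * Real.sqrt (2*t))))) atTop (nhds 0) := by
      simpa using h1.const_mul (Real.exp K * 2)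
    apply tendsto_of_tendsto_of_tendsto_of_le_of_le' tendsto_const_nhds h2
    · filter_upwards [eventually_ge_atTop (0:ℝ)] with t ht
      positivity
    · filter_upwards [eventually_ge_atTop (0:ℝ)] with t ht
      set s := a * Real.sqrt (2*t) with hs
      have hs0 : 0 ≤ s := by positivity
      have hc : Real.exp s / 2 ≤ Real.cosh s := by
        rw [Real.cosh_eq]; have := (Real.exp_pos (-s)).le; linarith
      have hinv : (Real.cosh s)⁻¹ ≤ 2 * Real.exp (-s) := by
        rw [Real.exp_neg, show 2 * (Real.exp s)⁻¹ = (Real.exp s / 2)⁻¹ by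
          field_simp]
        exact inv_anti₀ (by positivity) hc
      calc t * (Real.exp K / Real.cosh s)
          = Real.exp K * (t * (Real.cosh s)⁻¹) := by ring
        _ ≤ Real.exp K * (t * (2 * Real.exp (-s))) := by
            apply mul_le_mul_of_nonneg_left _ (Real.exp_pos K).le
            exact mul_le_mul_of_nonneg_left hinv ht
        _ = Real.exp K * 2 * (t * Real.exp (-s)) := by ring
  · -- the identity
    intro θ
    set C : ℝ := (2 * π) ^ (-(1 : ℝ) / 2) with hC
    have hCpos : 0 < C := Real.rpow_pos_of_pos (by positivity) _
    set A : ℝ := C ^ n with hA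
    have hApos : 0 < A := pow_pos hCpos n
    set B : ℝ := ∑ i, (-(x i)^2/2) with hB
    have hsum : ∑ i, x i = (n:ℝ) * θhat := by
      rw [hθhat]; field_simp
    have hp' : ∀ ψ : ℝ, p ψ x = A * Real.exp (B + ψ * ((n:ℝ)*θhat) - (n:ℝ)*ψ^2/2) := by
      intro ψ
      rw [hp ψ x, Finset.prod_mul_distrib, Finset.prod_const, Finset.card_univ,
        Fintype.card_fin, ← Real.exp_sum, ← hA]
      congr 1
      have step : ∀ i : Fin n, -(x i - ψ)^2/2 = (-(x i)^2/2) + ψ*(x i) + (-(ψ^2/2)) := by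
        intro i; ring
      rw [Finset.sum_congr rfl (fun i _ => step i), Finset.sum_add_distrib,
        Finset.sum_add_distrib, ← Finset.mul_sum, hsum, Finset.sum_const,
        Finset.card_univ, Fintype.card_fin, nsmul_eq_mul, ← hB]
      ring
    set u : ℝ := θhat - θ with hu
    have key : S θ x = Real.exp (-K) * Real.cosh (a * u) := by
      rw [hS θ x, hp' θ, hp' (θ - δ), hp' (θ + δ)]
      have e1 : B + (θ-δ) * ((n:ℝ)*θhat) - (n:ℝ)*(θ-δ)^2/2
          = (B + θ * ((n:ℝ)*θhat) - (n:ℝ)*θ^2/2) + (-(a*u) - K) := by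
        rw [ha, hK, hu]; ring
      have e2 : B + (θ+δ) * ((n:ℝ)*θhat) - (n:ℝ)*(θ+δ)^2/2
          = (B + θ * ((n:ℝ)*θhat) - (n:ℝ)*θ^2/2) + (a*u - K) := by
        rw [ha, hK, hu]; ring
      rw [e1, e2, Real.exp_add, Real.exp_add]
      have hE : (0:ℝ) < Real.exp (B + θ * ((n:ℝ)*θhat) - (n:ℝ)*θ^2/2) := Real.exp_pos _
      rw [Real.cosh_eq, show -(a*u) - K = -K + -(a*u) by ring,
        show a*u - K = -K + a*u by ring, Real.exp_add, Real.exp_add]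
      field_simp
      ring
    have hsq : Real.sqrt (2 * ((1/2) * u^2)) = |u| := by
      rw [show 2 * ((1/2) * u^2) = u^2 by ring, Real.sqrt_sq_eq_abs]
    have hcosh : Real.cosh (a * |u|) = Real.cosh (a * u) := by
      rcases abs_cases u with ⟨h,_⟩|⟨h,_⟩ <;> simp [h, mul_neg, Real.cosh_neg]
    show (S θ x)⁻¹ = Real.exp K / Real.cosh (a * Real.sqrt (2 * ((1/2) * u^2)))
    rw [key, hsq, hcosh, mul_inv, ← Real.exp_neg, neg_neg, div_eq_mul_inv]
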